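/- arXiv:1512.06581 — 2 statements merged into one kernel-verified Lean document; each statement's English description precedes it below -/
import Mathlib

section
/- Step-by-step search correctness of the hidden star-like chain (existence part of Theorem 1). Fix g ∈ G, integers s and u, an element h ∈ G (representing the hash value H(W) of the queried keyword W), a natural number m, exponents r : Fin (m+1) → ℤ and pointer values Pt : Fin (m+1) → G₁. Define the chain of keyword-searchable ciphertexts C : Fin (m+1) → G₁ × G × G₁ by C 0 = (e(g^s, h)^u, g^{r 0}, e(g^s, h)^{r 0} · Pt 0) and C (j+1) = (Pt j, g^{r (j+1)}, e(g^s, h)^{r (j+1)} · Pt (j+1)) for j+1 ≤ m. Define the sequence of pointers disclosed by the search algorithm using the trapdoor h^s and the structure's public part g^u by p 0 = e(g^u, h^s) and p (j+1) = (e((C j).2, h^s))⁻¹ · (C j).3. Then p j = (C j).1 for every j ≤ m, and moreover the pointer disclosed from the last ciphertext satisfies (e((C m).2, h^s))⁻¹ · (C m).3 = Pt m. -/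
/-- Step-by-step search correctness of the hidden star-like chain
(existence part of Theorem 1). -/
theorem spchs_chain_search_correct
    {G G₁ : Type*} [CommGroup G] [CommGroup G₁]
    (e : G → G → G₁)
    (hbl : ∀ x y z : G, e (x * y) z = e x z * e y z)
    (hbr : ∀ x y z : G, e x (y * z) = e x y * e x z)
    (g h : G) (s u : ℤ) (m : ℕ)
    (r : Fin (m + 1) → ℤ) (Pt : Fin (m + 1) → G₁)
    (C : Fin (m + 1) → G₁ × G × G₁)
    (p : Fin (m + 1) → G₁)
    (hC0 : C 0 = (e (g ^ s) h ^ u, g ^ r 0, e (g ^ s) h ^ r 0 * Pt 0))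
    (hCsucc : ∀ j : Fin m,
      C j.succ = (Pt j.castSucc, g ^ r j.succ, e (g ^ s) h ^ r j.succ * Pt j.succ))
    (hp0 : p 0 = e (g ^ u) (h ^ s))
    (hpsucc : ∀ j : Fin m,
      p j.succ = (e (C j.castSucc).2.1 (h ^ s))⁻¹ * (C j.castSucc).2.2) :
    (∀ j : Fin (m + 1), p j = (C j).1) ∧
      (e (C (Fin.last m)).2.1 (h ^ s))⁻¹ * (C (Fin.last m)).2.2 = Pt (Fin.last m) := by
  have keyl : ∀ (x : G) (a : ℤ) (z : G), e (x ^ a) z = e x z ^ a := fun x a z =>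
    map_zpow (MonoidHom.mk' (fun y => e y z) (fun a b => hbl a b z)) x a
  have keyr : ∀ (x z : G) (a : ℤ), e x (z ^ a) = e x z ^ a := fun x z a =>
    map_zpow (MonoidHom.mk' (fun y => e x y) (fun a b => hbr x a b)) z a
  -- key: e (g^a) (h^b) = e g h ^ (a*b)
  have key : ∀ a b : ℤ, e (g ^ a) (h ^ b) = e g h ^ (a * b) := by
    intro a b
    rw [keyl, keyr, ← zpow_mul, mul_comm b a]
  -- the second and third components of every C j
  have hC2 : ∀ j : Fin (m + 1), (C j).2 = (g ^ r j, e (g ^ s) h ^ r j * Pt j) := by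
    intro j
    induction j using Fin.cases with
    | zero => rw [hC0]
    | succ i => rw [hCsucc i]
  have hdec : ∀ j : Fin (m + 1),
      (e (C j).2.1 (h ^ s))⁻¹ * (C j).2.2 = Pt j := by
    intro j
    rw [hC2 j]
    simp only
    rw [keyl g (r j) (h ^ s), keyr g h s, keyl g s h, ← zpow_mul, inv_mul_cancel_left]
  refine ⟨?_, hdec (Fin.last m)⟩
  intro j
  induction j using Fin.cases with
  | zero =>
    rw [hp0, hC0, key]
    simp only
    rw [keyl g s h, ← zpow_mul, mul_comm]
  | succ i =>
    rw [hpsucc i, hdec i.castSucc, hCsucc i]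
end

section
/- Exact retrieval of the ciphertext chain (Theorem 1, consistency of the SPCHS instance, deterministic form). Fix g ∈ G, integers s and u, an element h ∈ G (representing the hash value H(W) of the queried keyword W), a natural number m, exponents r : Fin (m+1) → ℤ and pointer values Pt : Fin (m+1) → G₁. Define the chain of keyword-searchable ciphertexts C : Fin (m+1) → G₁ × G × G₁ by C 0 = (e(g^s, h)^u, g^{r 0}, e(g^s, h)^{r 0} · Pt 0) and C (j+1) = (Pt j, g^{r (j+1)}, e(g^s, h)^{r (j+1)} · Pt (j+1)) for j+1 ≤ m, and the disclosed pointers p 0 = e(g^u, h^s), p (j+1) = (e((C j).2, h^s))⁻¹ · (C j).3. Let S be a finite set of triples in G₁ × G₁-indexed form G₁ × G × G₁ (all uploaded ciphertexts) such that: (i) C j ∈ S for every j ≤ m; (ii) the first components of distinct elements of S are distinct; and (iii) no element of S has first component equal to Pt m. Then for every j ≤ m, C j is the unique element of S whose first component equals the disclosed pointer p j, and the final disclosed pointer (e((C m).2, h^s))⁻¹ · (C m).3 = Pt m matches no element of S. Consequently the StructuredSearch algorithm, which repeatedly matches the current pointer against the first components of S, finds exactly the ciphertexts C 0, …, C m and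 then terminates. -/
/-- Exact retrieval of the ciphertext chain
(Theorem 1, consistency of the SPCHS instance, deterministic form). -/
theorem spchs_exact_retrieval
    {G G₁ : Type*} [CommGroup G] [CommGroup G₁]
    (e : G → G → G₁)
    (hbl : ∀ x y z : G, e (x * y) z = e x z * e y z)
    (hbr : ∀ x y z : G, e x (y * z) = e x y * e x z)
    (g h : G) (s u : ℤ) (m : ℕ)
    (r : Fin (m + 1) → ℤ) (Pt : Fin (m + 1) → G₁)
    (C : Fin (m + 1) → G₁ × G × G₁)
    (p : Fin (m + 1) → G₁)
    (hC0 : C 0 = (e (g ^ s) h ^ u, g ^ r 0, e (g ^ s) h ^ r 0 * Pt 0))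
    (hCsucc : ∀ j : Fin m,
      C j.succ = (Pt j.castSucc, g ^ r j.succ, e (g ^ s) h ^ r j.succ * Pt j.succ))
    (hp0 : p 0 = e (g ^ u) (h ^ s))
    (hpsucc : ∀ j : Fin m,
      p j.succ = (e (C j.castSucc).2.1 (h ^ s))⁻¹ * (C j.castSucc).2.2)
    (S : Finset (G₁ × G × G₁))
    (hmem : ∀ j : Fin (m + 1), C j ∈ S)
    (hinj : ∀ c ∈ S, ∀ d ∈ S, c.1 = d.1 → c = d)
    (hlast : ∀ c ∈ S, c.1 ≠ Pt (Fin.last m)) :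
    (∀ j : Fin (m + 1),
      (C j).1 = p j ∧ ∀ c ∈ S, c.1 = p j → c = C j) ∧
    (∀ c ∈ S, c.1 ≠ (e (C (Fin.last m)).2.1 (h ^ s))⁻¹ * (C (Fin.last m)).2.2) := by
  -- left-argument zpow
  have hkeyl : ∀ (a : ℤ) (z : G), e (g ^ a) z = e g z ^ a := by
    intro a z
    exact map_zpow (MonoidHom.mk' (fun x => e x z) (fun x y => hbl x y z)) g a
  -- right-argument zpow
  have hkeyr : ∀ (b : ℤ) (x : G), e x (h ^ b) = e x h ^ b := by
    intro b x
    exact map_zpow (MonoidHom.mk' (fun y => e x y) (fun y z => hbr x y z)) h b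
  -- cancellation
  have hc : ∀ (a : ℤ) (P : G₁),
      (e (g ^ a) (h ^ s))⁻¹ * (e (g ^ s) h ^ a * P) = P := by
    intro a P
    rw [hkeyl a, hkeyr s, hkeyl s]
    group
  have hform : ∀ j : Fin (m + 1),
      (C j).2.1 = g ^ r j ∧ (C j).2.2 = e (g ^ s) h ^ r j * Pt j := by
    intro j
    induction j using Fin.cases with
    | zero => rw [hC0]; exact ⟨rfl, rfl⟩
    | succ i => rw [hCsucc i]; exact ⟨rfl, rfl⟩
  have hfirst : ∀ j : Fin (m + 1), (C j).1 = p j := by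
    intro j
    induction j using Fin.cases with
    | zero =>
      rw [hC0, hp0, hkeyl u, hkeyr s, hkeyl s]
    | succ i =>
      rw [hpsucc i, (hform i.castSucc).1, (hform i.castSucc).2, hc, hCsucc i]
  have hlastp : (e (C (Fin.last m)).2.1 (h ^ s))⁻¹ * (C (Fin.last m)).2.2
      = Pt (Fin.last m) := by
    rw [(hform (Fin.last m)).1, (hform (Fin.last m)).2, hc]
  refine ⟨fun j => ⟨hfirst j, fun c hc' hceq => ?_⟩, fun c hcS hceq => ?_⟩
  · exact hinj c hc' (C j) (hmem j) (by rw [hceq, hfirst j])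
  · exact hlast c hcS (hceq.trans hlastp)
end
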